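/- If A is a binary assertion, then the combinable wand and the standard wand coincide: σ_w ⊨ A -*c B if and only if σ_w ⊨ A -* B, for every state σ_w and intuitionistic assertion B. -/
import Mathlib


/-- A state of the fractional-permission model: a permission mask
`pi : L → ℚ` (with values in `[0,1]`) and a partial heap `hp : L → Option V`,
subject to the validity condition that positive permission implies a defined value. -/
structure FState (L V : Type) where
  pi : L → ℚ
  hp : L → Option V
  nonneg : ∀ l, 0 ≤ pi l
  le_one : ∀ l, pi l ≤ 1
  valid : ∀ l, 0 < pi l → (hp l).isSome

/-- Compatibility: heaps agree on the common domain and permissions sum to at most 1. -/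
def compat {L V : Type} (s1 s2 : FState L V) : Prop :=
  (∀ l v1 v2, s1.hp l = some v1 → s2.hp l = some v2 → v1 = v2) ∧
  (∀ l, s1.pi l + s2.pi l ≤ 1)

/-- Union of partial heaps. -/
def hunion {V : Type} (o1 o2 : Option V) : Option V :=
  match o1 with
  | some v => some v
  | none => o2

open Classical in
/-- Partial addition of states. -/
noncomputable def fadd {L V : Type} (s1 s2 : FState L V) : Option (FState L V) :=
  if h : compat s1 s2 then
    some { pi := fun l => s1.pi l + s2.pi l,
           hp := fun l => hunion (s1.hp l) (s2.hp l),
           nonneg := fun l => add_nonneg (s1.nonneg l) (s2.nonneg l),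
           le_one := fun l => h.2 l,
           valid := by
             intro l hl
             have hl' : 0 < s1.pi l + s2.pi l := hl
             rcases h1 : s1.hp l with _ | v
             · have h2 : 0 < s2.pi l := by
                 by_contra hc
                 push_neg at hc
                 have hpos : 0 < s1.pi l := by
                   have := s2.nonneg l
                   linarith
                 have := s1.valid l hpos
                 rw [h1] at this
                 simp at this
               have h2' := s2.valid l h2
               simp only [hunion, h1]
               exact h2'
             · simp [hunion, h1] }
  else none

/-- `t` is the state `s` with all permissions multiplied by `α` (same heap). -/
def isSmul {L V : Type} (α : ℚ) (s t : FState L V) : Prop :=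
  (∀ l, t.pi l = α * s.pi l) ∧ t.hp = s.hp

/-- Separating conjunction. -/
def satStar {L V : Type} (A B : FState L V → Prop) (σ : FState L V) : Prop :=
  ∃ σ1 σ2, fadd σ1 σ2 = some σ ∧ A σ1 ∧ B σ2

/-- Fractional assertion `A^p`. -/
def fracSat {L V : Type} (p : ℚ) (A : FState L V → Prop) (σ : FState L V) : Prop :=
  ∃ σ', A σ' ∧ isSmul p σ' σ

/-- Standard magic wand. -/
def satWand {L V : Type} (A B : FState L V → Prop) (σw : FState L V) : Prop :=
  ∀ σA σ, A σA → fadd σA σw = some σ → B σ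

/-- Order induced by ⊕. -/
def fgeq {L V : Type} (σ2 σ1 : FState L V) : Prop :=
  ∃ r, fadd σ1 r = some σ2

/-- `B` is intuitionistic: closed under state extension. -/
def intuit {L V : Type} (B : FState L V → Prop) : Prop :=
  ∀ σ σ' r, B σ → fadd σ r = some σ' → B σ'

/-- `A` is combinable: `A^p * A^q ⊨ A^{p+q}`. -/
def combinable {L V : Type} (A : FState L V → Prop) : Prop :=
  ∀ p q : ℚ, 0 < p → 0 < q → p + q ≤ 1 →
    ∀ σ, satStar (fracSat p A) (fracSat q A) σ → fracSat (p + q) A σ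

/-- Some scaling of `σw` (by `0 < α ≤ 1`) is compatible with `σA`. -/
def scaledCompat {L V : Type} (σA σw : FState L V) : Prop :=
  ∃ α t, 0 < α ∧ α ≤ 1 ∧ isSmul α σw t ∧ compat σA t

/-- Truncation of `σw` so that it fits next to `σA`. -/
def trunc {L V : Type} (sA sw : FState L V) : FState L V :=
  { pi := fun l => min (sw.pi l) (1 - sA.pi l),
    hp := sw.hp,
    nonneg := fun l => le_min (sw.nonneg l) (by linarith [sA.le_one l]),
    le_one := fun l => le_trans (min_le_left _ _) (sw.le_one l),
    valid := fun l hl => sw.valid l (lt_of_lt_of_le hl (min_le_left _ _)) }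

open Classical in
/-- The transformation `R(σA, σw)` used in the definition of combinable wands. -/
noncomputable def Rtrans {L V : Type} (σA σw : FState L V) : FState L V :=
  if scaledCompat σA σw then trunc σA σw else σw

/-- Combinable magic wand `A -*c B`. -/
def satCWand {L V : Type} (A B : FState L V → Prop) (σw : FState L V) : Prop :=
  ∀ σA σ, A σA → fadd σA (Rtrans σA σw) = some σ → B σ

/-- A stable state: positive permission iff the heap value is defined. -/
def fstable {L V : Type} (σ : FState L V) : Prop :=
  ∀ l, 0 < σ.pi l ↔ (σ.hp l).isSome

open Classical in
/-- The state with permission `q` and value `v` at the single location `l0`. -/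
noncomputable def single {L V : Type} (l0 : L) (v : V) (q : ℚ)
    (h0 : 0 ≤ q) (h1 : q ≤ 1) : FState L V :=
  { pi := fun l => if l = l0 then q else 0,
    hp := fun l => if l = l0 then some v else none,
    nonneg := by intro l; by_cases h : l = l0 <;> simp [h, h0]
    le_one := by intro l; by_cases h : l = l0 <;> simp [h, h1]
    valid := by
      intro l hl
      by_cases h : l = l0 <;> simp [h] at hl ⊢ }

/-- The binary restriction of a state. -/
noncomputable def binState {L V : Type} (σ : FState L V) : FState L V :=
  { pi := fun l => if σ.pi l = 1 then 1 else 0,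
    hp := σ.hp,
    nonneg := by intro l; show 0 ≤ if σ.pi l = 1 then (1:ℚ) else 0; split <;> norm_num,
    le_one := by intro l; show (if σ.pi l = 1 then (1:ℚ) else 0) ≤ 1; split <;> norm_num,
    valid := by
      intro l hl
      have hl' : 0 < if σ.pi l = 1 then (1:ℚ) else 0 := hl
      split at hl'
      · next h => exact σ.valid l (by rw [h]; norm_num)
      · simp at hl' }

/-- `A` is a binary assertion. -/
def binaryAssertion {L V : Type} (A : FState L V → Prop) : Prop :=
  ∀ σ, A σ → A (binState σ)

/-- Heaps agree on the common domain. -/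
def heapCompat {L V : Type} (s1 s2 : FState L V) : Prop :=
  ∀ l v1 v2, s1.hp l = some v1 → s2.hp l = some v2 → v1 = v2

lemma FState.ext' {L V : Type} {s t : FState L V} (hpi : s.pi = t.pi)
    (hhp : s.hp = t.hp) : s = t := by
  cases s; cases t; simp_all

lemma fadd_compat' {L V : Type} {s1 s2 σ : FState L V}
    (h : fadd s1 s2 = some σ) : compat s1 s2 := by
  by_cases hc : compat s1 s2
  · exact hc
  · simp [fadd, hc] at h

lemma fadd_pi {L V : Type} {s1 s2 σ : FState L V}
    (h : fadd s1 s2 = some σ) : ∀ l, σ.pi l = s1.pi l + s2.pi l := by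
  have hc := fadd_compat' h
  rw [fadd, dif_pos hc] at h
  intro l
  rw [← Option.some.inj h]

lemma fadd_hp {L V : Type} {s1 s2 σ : FState L V}
    (h : fadd s1 s2 = some σ) : ∀ l, σ.hp l = hunion (s1.hp l) (s2.hp l) := by
  have hc := fadd_compat' h
  rw [fadd, dif_pos hc] at h
  intro l
  rw [← Option.some.inj h]

lemma fadd_isSome {L V : Type} {s1 s2 : FState L V} (h : compat s1 s2) :
    ∃ σ, fadd s1 s2 = some σ := ⟨_, dif_pos h⟩

/-- if `A` is a binary assertion and `B` is intuitionistic, the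
combinable wand and the standard wand coincide. -/
theorem cwand_iff_wand_of_binary {L V : Type} (A B : FState L V → Prop)
    (hA : binaryAssertion A) (hB : intuit B) (σw : FState L V) :
    satCWand A B σw ↔ satWand A B σw := by
  constructor
  · -- combinable wand implies standard wand
    intro h σA σ hAσA hadd
    have hc : compat σA σw := fadd_compat' hadd
    have hsc : scaledCompat σA σw :=
      ⟨1, σw, one_pos, le_refl 1, ⟨fun l => (one_mul _).symm, rfl⟩, hc⟩
    have htr : trunc σA σw = σw := by
      apply FState.ext'
      · funext l
        have := hc.2 l
        simp only [trunc]
        exact min_eq_left (by linarith)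
      · rfl
    have hR : Rtrans σA σw = σw := by rw [Rtrans, if_pos hsc, htr]
    exact h σA σ hAσA (by rw [hR]; exact hadd)
  · -- standard wand implies combinable wand
    intro h σA σ hAσA hadd
    by_cases hsc : scaledCompat σA σw
    · -- truncation case
      rw [Rtrans, if_pos hsc] at hadd
      have hc : compat σA (trunc σA σw) := fadd_compat' hadd
      obtain ⟨α, t, hα0, hα1, ⟨htpi, hthp⟩, hct⟩ := hsc
      -- key: full permission in σA forces zero permission in σw
      have hkey : ∀ l, σA.pi l = 1 → σw.pi l = 0 := by
        intro l hl
        have h1 := hct.2 l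
        rw [hl, htpi l] at h1
        have h2 : α * σw.pi l ≤ 0 := by linarith
        have h3 : α * σw.pi l = 0 :=
          le_antisymm h2 (mul_nonneg hα0.le (σw.nonneg l))
        rcases mul_eq_zero.mp h3 with h4 | h4
        · exact absurd h4 (ne_of_gt hα0)
        · exact h4
      -- binState σA is compatible with full σw
      have hcb : compat (binState σA) σw := by
        constructor
        · intro l v1 v2 h1 h2
          apply hct.1 l v1 v2 h1
          rw [hthp]; exact h2
        · intro l
          show (if σA.pi l = 1 then (1:ℚ) else 0) + σw.pi l ≤ 1
          by_cases hl : σA.pi l = 1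
          · rw [if_pos hl, hkey l hl]; norm_num
          · rw [if_neg hl]
            simpa using σw.le_one l
      obtain ⟨σ', hσ'⟩ := fadd_isSome hcb
      have hBσ' : B σ' := h (binState σA) σ' (hA σA hAσA) hσ'
      -- σ'.pi ≤ σ.pi pointwise
      have hpile : ∀ l, σ'.pi l ≤ σ.pi l := by
        intro l
        rw [fadd_pi hσ' l, fadd_pi hadd l]
        show (if σA.pi l = 1 then (1:ℚ) else 0) + σw.pi l ≤
          σA.pi l + min (σw.pi l) (1 - σA.pi l)
        by_cases hl : σA.pi l = 1
        · rw [if_pos hl, hkey l hl, hl]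
          have : min (0:ℚ) (1 - 1) = 0 := by norm_num
          simp [hkey l hl]
        · rw [if_neg hl]
          rcases le_total (σw.pi l) (1 - σA.pi l) with h1 | h1
          · rw [min_eq_left h1]; linarith [σA.nonneg l]
          · rw [min_eq_right h1]; linarith [σw.le_one l]
      -- the heaps of σ' and σ coincide
      have hheq : σ'.hp = σ.hp := by
        funext l
        rw [fadd_hp hσ' l, fadd_hp hadd l]
        rfl
      -- build the remainder state r
      set r : FState L V :=
        { pi := fun l => σ.pi l - σ'.pi l,
          hp := σ.hp,
          nonneg := fun l => by show 0 ≤ σ.pi l - σ'.pi l; linarith [hpile l],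
          le_one := fun l => by
            show σ.pi l - σ'.pi l ≤ 1
            linarith [σ.le_one l, σ'.nonneg l],
          valid := fun l hl => σ.valid l (by
            have h0 : 0 < σ.pi l - σ'.pi l := hl
            linarith [σ'.nonneg l]) } with hr
      have hcr : compat σ' r := by
        constructor
        · intro l v1 v2 h1 h2
          rw [hheq] at h1
          rw [h1] at h2
          exact Option.some.inj h2
        · intro l
          show σ'.pi l + (σ.pi l - σ'.pi l) ≤ 1
          have := σ.le_one l
          linarith
      obtain ⟨σ'', hσ''⟩ := fadd_isSome hcr
      have hσeq : σ'' = σ := by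
        apply FState.ext'
        · funext l
          rw [fadd_pi hσ'' l]
          show σ'.pi l + (σ.pi l - σ'.pi l) = σ.pi l
          ring
        · funext l
          rw [fadd_hp hσ'' l, hheq]
          show hunion (σ.hp l) (σ.hp l) = σ.hp l
          cases σ.hp l <;> rfl
      rw [← hσeq]
      exact hB σ' σ'' r hBσ' hσ''
    · rw [Rtrans, if_neg hsc] at hadd
      exact h σA σ hAσA hadd
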